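/- For p ≥ 3, the graph M_{2p}, consisting of two disjoint copies of K_p joined by a perfect matching, has exactly C(p,2) + 1 distinct lines. -/

import Mathlib

open scoped Classical

namespace ChenChvatal

variable {V : Type*}

/-- `G` has diameter exactly two: some pair of distinct vertices is non-adjacent,
and any two distinct non-adjacent vertices have a common neighbor. -/
def DiamTwo (G : SimpleGraph V) : Prop :=
  (∃ x y : V, x ≠ y ∧ ¬ G.Adj x y) ∧
    ∀ x y : V, x ≠ y → ¬ G.Adj x y → ∃ z, G.Adj x z ∧ G.Adj z y

/-- The line of a diameter-two graph defined by two vertices. -/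
noncomputable def line (G : SimpleGraph V) (x y : V) : Set V :=
  if G.Adj x y then {x, y} ∪ symmDiff (G.neighborSet x) (G.neighborSet y)
  else {x, y} ∪ (G.neighborSet x ∩ G.neighborSet y)

/-- The set of all lines of a graph. -/
def lines (G : SimpleGraph V) : Set (Set V) :=
  {ℓ | ∃ x y : V, x ≠ y ∧ ℓ = line G x y}

/-- The set of non-neighbors of `x`, other than `x` itself. -/
def N2 (G : SimpleGraph V) (x : V) : Set V := {u | u ≠ x ∧ ¬ G.Adj x u}


/-- Two copies of `K_p` joined by a perfect matching. -/
def M (p : ℕ) : SimpleGraph (Fin p ⊕ Fin p) where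
  Adj u v :=
    match u, v with
    | Sum.inl i, Sum.inl j => i ≠ j
    | Sum.inr i, Sum.inr j => i ≠ j
    | Sum.inl i, Sum.inr j => i = j
    | Sum.inr i, Sum.inl j => i = j
  symm := ⟨by rintro (i | i) (j | j) h <;> exact h.symm⟩
  loopless := ⟨by rintro (i | i) h <;> exact h rfl⟩

/-- `K_{1,2,2}` minus an edge incident to the degree-four vertex `4`;
vertices `0,2` and `1,3` are the parts of size two. -/
def K122' : SimpleGraph (Fin 5) :=
  SimpleGraph.fromEdgeSet {s(0,1), s(0,3), s(2,1), s(2,3), s(2,4), s(1,4), s(3,4)}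

/-- The house graph: five-cycle `0 1 2 3 4` with the chord `{1,4}`. -/
def house : SimpleGraph (Fin 5) :=
  SimpleGraph.fromEdgeSet {s(0,1), s(1,2), s(2,3), s(3,4), s(4,0), s(1,4)}

/-- The non-neighbor ("mate") involution on `Fin q ⊕ Fin p × Fin 2`. -/
def mate (q p : ℕ) : (Fin q ⊕ Fin p × Fin 2) → (Fin q ⊕ Fin p × Fin 2)
  | Sum.inl j => Sum.inl j
  | Sum.inr (i, k) => Sum.inr (i, k + 1)

lemma mate_invol (q p : ℕ) : Function.Involutive (mate q p) := by
  rintro (j | ⟨i, k⟩)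
  · rfl
  · show Sum.inr (i, k + 1 + 1) = Sum.inr (i, k)
    have h : (1 : Fin 2) + 1 = 0 := rfl
    rw [add_assoc, h, add_zero]

/-- The complete multipartite graph with `q` parts of size one and `p` parts of size two. -/
def Kqp (q p : ℕ) : SimpleGraph (Fin q ⊕ Fin p × Fin 2) where
  Adj u v := u ≠ v ∧ v ≠ mate q p u
  symm := ⟨by
    rintro u v ⟨h1, h2⟩
    refine ⟨h1.symm, fun h => h2 ?_⟩
    rw [h]
    exact (mate_invol q p v).symm⟩
  loopless := ⟨fun u h => h.1 rfl⟩


section Aux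
variable {p : ℕ}

def L (i j : Fin p) : Set (Fin p ⊕ Fin p) := {.inl i, .inl j, .inr i, .inr j}

lemma line_comm (G : SimpleGraph V) (x y : V) : line G x y = line G y x := by
  unfold line
  rw [G.adj_comm]
  split
  · rw [Set.pair_comm, symmDiff_comm]
  · rw [Set.pair_comm, Set.inter_comm]

lemma line_ll {i j : Fin p} (h : i ≠ j) :
    line (M p) (Sum.inl i) (Sum.inl j) = L i j := by
  have hadj : (M p).Adj (Sum.inl i) (Sum.inl j) := h
  rw [line, if_pos hadj]
  ext v
  rcases v with k | k <;>
    simp [L, SimpleGraph.neighborSet, symmDiff_def, M] <;> aesop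

lemma line_rr {i j : Fin p} (h : i ≠ j) :
    line (M p) (Sum.inr i) (Sum.inr j) = L i j := by
  have hadj : (M p).Adj (Sum.inr i) (Sum.inr j) := h
  rw [line, if_pos hadj]
  ext v
  rcases v with k | k <;>
    simp [L, SimpleGraph.neighborSet, symmDiff_def, M] <;> aesop

lemma line_univ (i : Fin p) : line (M p) (Sum.inl i) (Sum.inr i) = Set.univ := by
  have hadj : (M p).Adj (Sum.inl i) (Sum.inr i) := rfl
  rw [line, if_pos hadj]
  ext v
  rcases v with k | k <;>
    simp [SimpleGraph.neighborSet, symmDiff_def, M] <;> tauto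

lemma line_lr {i j : Fin p} (h : i ≠ j) :
    line (M p) (Sum.inl i) (Sum.inr j) = L i j := by
  have hadj : ¬ (M p).Adj (Sum.inl i) (Sum.inr j) := h
  rw [line, if_neg hadj]
  ext v
  rcases v with k | k <;>
    simp [L, SimpleGraph.neighborSet, M] <;> tauto

lemma L_symm (i j : Fin p) : L i j = L j i := by
  ext v; simp [L]; tauto

noncomputable def F : Sym2 (Fin p) → Set (Fin p ⊕ Fin p) :=
  Sym2.lift ⟨L, L_symm⟩

lemma F_mk (i j : Fin p) : F s(i, j) = L i j := rfl

lemma inl_mem_L {a i j : Fin p} : Sum.inl a ∈ L i j ↔ a = i ∨ a = j := by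
  simp [L]

lemma lines_eq (hp : 3 ≤ p) :
    lines (M p) = insert Set.univ (F '' {e : Sym2 (Fin p) | ¬ e.IsDiag}) := by
  ext ℓ
  constructor
  · rintro ⟨x, y, hxy, rfl⟩
    rcases x with i | i <;> rcases y with j | j
    · have hij : i ≠ j := fun h => hxy (by rw [h])
      exact Or.inr ⟨s(i, j), by simpa using hij, by rw [F_mk, line_ll hij]⟩
    · by_cases hij : i = j
      · subst hij; exact Or.inl (line_univ i)
      · exact Or.inr ⟨s(i, j), by simpa using hij, by rw [F_mk, line_lr hij]⟩
    · by_cases hij : j = i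
      · subst hij; rw [line_comm]; exact Or.inl (line_univ j)
      · rw [line_comm]
        exact Or.inr ⟨s(j, i), by simpa using hij, by rw [F_mk, line_lr hij]⟩
    · have hij : i ≠ j := fun h => hxy (by rw [h])
      exact Or.inr ⟨s(i, j), by simpa using hij, by rw [F_mk, line_rr hij]⟩
  · rintro (rfl | ⟨e, he, rfl⟩)
    · have h0 : 0 < p := by omega
      exact ⟨Sum.inl ⟨0, h0⟩, Sum.inr ⟨0, h0⟩, by simp, (line_univ _).symm⟩
    · induction e using Sym2.ind with
      | _ i j =>
        have hij : i ≠ j := by simpa using he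
        exact ⟨Sum.inl i, Sum.inl j, by simpa using hij, by rw [F_mk, line_ll hij]⟩

lemma F_injOn : Set.InjOn (F (p := p)) {e : Sym2 (Fin p) | ¬ e.IsDiag} := by
  rintro e1 h1 e2 h2 heq
  induction e1 using Sym2.ind with
  | _ i j =>
  induction e2 using Sym2.ind with
  | _ a b =>
  have hij : i ≠ j := by simpa using h1
  rw [F_mk, F_mk] at heq
  have hi : i = a ∨ i = b := by rw [← inl_mem_L, ← heq, inl_mem_L]; tauto
  have hj : j = a ∨ j = b := by rw [← inl_mem_L, ← heq, inl_mem_L]; tauto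
  rw [Sym2.eq_iff]
  rcases hi with rfl | rfl <;> rcases hj with rfl | rfl <;> tauto

end Aux

/-- For `p ≥ 3`, the graph `M_{2p}` has exactly `C(p,2) + 1` lines. -/
theorem stmt8 (p : ℕ) (hp : 3 ≤ p) :
    (lines (M p)).ncard = p.choose 2 + 1 := by
  rw [lines_eq hp]
  have hnot : Set.univ ∉ F '' {e : Sym2 (Fin p) | ¬ e.IsDiag} := by
    rintro ⟨e, he, heq⟩
    induction e using Sym2.ind with
    | _ i j =>
    rw [F_mk] at heq
    have hk : ∃ k : Fin p, k ≠ i ∧ k ≠ j := by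
      by_contra hc
      push_neg at hc
      have hsub : (Finset.univ : Finset (Fin p)) ⊆ {i, j} := by
        intro k _
        by_cases h : k = i
        · simp [h]
        · simp [hc k h]
      have := Finset.card_le_card hsub
      simp at this
      have h2 : ({i, j} : Finset (Fin p)).card ≤ 2 := Finset.card_insert_le _ _ |>.trans (by simp)
      omega
    obtain ⟨k, hki, hkj⟩ := hk
    have : Sum.inl k ∈ L i j := heq ▸ Set.mem_univ _
    rw [inl_mem_L] at this
    tauto
  rw [Set.ncard_insert_of_notMem hnot (Set.toFinite _),
    Set.ncard_image_of_injOn F_injOn]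
  rw [Set.ncard_eq_toFinset_card', Set.toFinset_setOf, ← Fintype.card_subtype,
    Sym2.card_subtype_not_diag, Fintype.card_fin]


end ChenChvatal
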